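/- Let X be a compact metric space and δ > 0. The map sending a nonempty compact subset K of X to M_δ(K), the maximum cardinality of a collection of pairwise disjoint closed balls of radius δ with centres in K, is lower semicontinuous with respect to the Hausdorff metric on the space of nonempty compact subsets of X. -/

import Mathlib

open Set Metric Filter MeasureTheory TopologicalSpace

noncomputable def coveringNumber {X : Type*} [MetricSpace X] (δ : ℝ) (F : Set X) : ℕ∞ :=
  sInf {m : ℕ∞ | ∃ C : Finset (Set X), (C.card : ℕ∞) = m ∧
    (∀ U ∈ C, IsOpen U ∧ Metric.diam U ≤ δ) ∧ F ⊆ ⋃ U ∈ C, U}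

noncomputable def packingNumber {X : Type*} [MetricSpace X] (δ : ℝ) (F : Set X) : ℕ∞ :=
  sSup {m : ℕ∞ | ∃ S : Finset X, (S.card : ℕ∞) = m ∧ (↑S : Set X) ⊆ F ∧
    (S : Set X).Pairwise fun x y => Disjoint (Metric.closedBall x δ) (Metric.closedBall y δ)}

noncomputable def upperBoxDim {X : Type*} [MetricSpace X] (F : Set X) : ℝ :=
  Filter.limsup (fun δ : ℝ => Real.log ((coveringNumber δ F).toNat) / (-Real.log δ))
    (nhdsWithin 0 (Set.Ioi 0))

noncomputable def lowerBoxDim {X : Type*} [MetricSpace X] (F : Set X) : ℝ :=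
  Filter.liminf (fun δ : ℝ => Real.log ((coveringNumber δ F).toNat) / (-Real.log δ))
    (nhdsWithin 0 (Set.Ioi 0))

noncomputable def packingDim {X : Type*} [MetricSpace X] (F : Set X) : ℝ :=
  sInf {s : ℝ | ∃ E : ℕ → Set X, F ⊆ ⋃ i, E i ∧ ∀ i, upperBoxDim (E i) ≤ s}

noncomputable def covDim (Y : Type*) [TopologicalSpace Y] : ℕ∞ :=
  sInf {m : ℕ∞ | ∀ (ι : Type) (U : ι → Set Y), (∀ i, IsOpen (U i)) → (⋃ i, U i) = Set.univ →
    ∃ (κ : Type) (V : κ → Set Y), (∀ j, IsOpen (V j)) ∧ (⋃ j, V j) = Set.univ ∧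
      (∀ j, ∃ i, V j ⊆ U i) ∧ ∀ y : Y, ENat.card {j : κ // y ∈ V j} ≤ m + 1}

/-- In a compact space, the set of pairs of centres whose closed `δ`-balls are disjoint
is open. -/
lemma isOpen_disjoint_balls {X : Type*} [MetricSpace X] [CompactSpace X] (δ : ℝ) :
    IsOpen {p : X × X | Disjoint (Metric.closedBall p.1 δ) (Metric.closedBall p.2 δ)} := by
  have hCclosed : IsClosed {q : X × X × X | dist q.1 q.2.1 ≤ δ ∧ dist q.1 q.2.2 ≤ δ} := by
    apply IsClosed.inter
    · exact isClosed_le (continuous_fst.dist (continuous_snd.fst)) continuous_const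
    · exact isClosed_le (continuous_fst.dist (continuous_snd.snd)) continuous_const
  have hCcomp : IsCompact ((fun q : X × X × X => q.2) ''
      {q : X × X × X | dist q.1 q.2.1 ≤ δ ∧ dist q.1 q.2.2 ≤ δ}) :=
    (hCclosed.isCompact).image continuous_snd
  have hset : {p : X × X | Disjoint (Metric.closedBall p.1 δ) (Metric.closedBall p.2 δ)} =
      ((fun q : X × X × X => q.2) ''
        {q : X × X × X | dist q.1 q.2.1 ≤ δ ∧ dist q.1 q.2.2 ≤ δ})ᶜ := by
    ext p
    simp only [Set.mem_compl_iff, Set.mem_image, Set.mem_setOf_eq, not_exists]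
    constructor
    · rintro hd q ⟨⟨h1, h2⟩, rfl⟩
      exact (Set.not_disjoint_iff.2 ⟨q.1, h1, h2⟩) hd
    · intro h
      rw [Set.disjoint_left]
      intro z hz1 hz2
      exact h (z, p) ⟨⟨hz1, hz2⟩, rfl⟩
  rw [hset]
  exact hCcomp.isClosed.isOpen_compl

theorem stmt1 {X : Type*} [MetricSpace X] [CompactSpace X] (δ : ℝ) (hδ : 0 < δ) :
    LowerSemicontinuous
      (fun K : TopologicalSpace.NonemptyCompacts X => packingNumber δ (K : Set X)) := by
  classical
  intro K₀ y hy
  simp only [_root_.packingNumber, lt_sSup_iff, Set.mem_setOf_eq] at hy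
  obtain ⟨m, ⟨S, hcard, hsub, hpair⟩, hym⟩ := hy
  set D := {p : X × X | Disjoint (Metric.closedBall p.1 δ) (Metric.closedBall p.2 δ)} with hD
  have hDopen := isOpen_disjoint_balls (X := X) δ
  -- the finite set of distinct pairs from `S`
  set T : Finset (X × X) := (S ×ˢ S).filter (fun p => p.1 ≠ p.2) with hT
  have hTD : ∀ p ∈ T, p ∈ D := by
    intro p hp
    simp only [hT, Finset.mem_filter, Finset.mem_product] at hp
    exact hpair (hp.1.1) (hp.1.2) hp.2
  -- choose a uniform ε > 0 such that perturbations of pairs in T stay in D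
  have hchoice : ∀ p : X × X, p ∈ T → ∃ ε > 0, Metric.ball p ε ⊆ D :=
    fun p hp => Metric.isOpen_iff.mp hDopen p (hTD p hp)
  choose! f hf0 hfD using hchoice
  obtain ⟨ε, hε0, hεle⟩ : ∃ ε > 0, ∀ p ∈ T, ε ≤ f p := by
    set F : Finset ℝ := insert 1 (T.image f) with hF
    refine ⟨F.min' ⟨1, Finset.mem_insert_self 1 _⟩, ?_, ?_⟩
    · rcases Finset.mem_insert.mp (F.min'_mem ⟨1, Finset.mem_insert_self 1 _⟩) with h | h
      · rw [h]; norm_num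
      · obtain ⟨p, hp, hpe⟩ := Finset.mem_image.mp h
        rw [← hpe]; exact hf0 p hp
    · intro p hp
      exact Finset.min'_le F (f p) (Finset.mem_insert_of_mem (Finset.mem_image_of_mem f hp))
  -- balls of radius ε around pairs in T stay in D
  have hkey : ∀ p ∈ T, ∀ q : X × X, dist q.1 p.1 < ε → dist q.2 p.2 < ε → q ∈ D := by
    intro p hp q h1 h2
    apply hfD p hp
    rw [Metric.mem_ball, Prod.dist_eq]
    exact max_lt (lt_of_lt_of_le h1 (hεle p hp)) (lt_of_lt_of_le h2 (hεle p hp))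
  rw [Metric.eventually_nhds_iff]
  refine ⟨ε, hε0, fun K hK => ?_⟩
  have hHD : Metric.hausdorffDist (K₀ : Set X) (K : Set X) < ε := by
    rw [Metric.hausdorffDist_comm, ← NonemptyCompacts.dist_eq]
    exact hK
  -- choose nearby points in K for each element of S
  have hmove : ∀ x ∈ S, ∃ x' ∈ (K : Set X), dist x x' < ε := by
    intro x hx
    exact Metric.exists_dist_lt_of_hausdorffDist_lt (hsub hx) hHD
      (Metric.hausdorffEdist_ne_top_of_nonempty_of_bounded K₀.nonempty K.nonempty
        K₀.isCompact.isBounded K.isCompact.isBounded)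
  choose! g hgK hgd using hmove
  -- the perturbed finset
  set S' : Finset X := S.image g with hS'
  have hginj : Set.InjOn g (S : Set X) := by
    intro a ha b hb hab
    by_contra hne
    have hpT : (a, b) ∈ T := by
      simp only [hT, Finset.mem_filter, Finset.mem_product]
      exact ⟨⟨ha, hb⟩, hne⟩
    have hdisj : ((g a, g b) : X × X) ∈ D :=
      hkey (a, b) hpT (g a, g b) (by rw [dist_comm]; exact hgd a ha)
        (by rw [dist_comm]; exact hgd b hb)
    have : g a ∈ Metric.closedBall (g a) δ := Metric.mem_closedBall_self hδ.le
    rw [hD, Set.mem_setOf_eq, hab] at hdisj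
    exact Set.not_disjoint_iff.2 ⟨g b, by rw [← hab]; exact hab ▸ this, Metric.mem_closedBall_self hδ.le⟩ hdisj
  have hcard' : S'.card = S.card := Finset.card_image_of_injOn hginj
  -- S' witnesses a packing of K of the same cardinality
  have hmem : (S'.card : ℕ∞) ∈ {m : ℕ∞ | ∃ S : Finset X, (S.card : ℕ∞) = m ∧
      (↑S : Set X) ⊆ (K : Set X) ∧ (S : Set X).Pairwise fun x y =>
        Disjoint (Metric.closedBall x δ) (Metric.closedBall y δ)} := by
    refine ⟨S', rfl, ?_, ?_⟩
    · intro z hz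
      rw [hS', Finset.coe_image] at hz
      obtain ⟨x, hx, rfl⟩ := hz
      exact hgK x hx
    · intro a ha b hb hab
      rw [hS', Finset.coe_image] at ha hb
      obtain ⟨xa, hxa, rfl⟩ := ha
      obtain ⟨xb, hxb, rfl⟩ := hb
      have hxab : xa ≠ xb := fun h => hab (by rw [h])
      have hpT : (xa, xb) ∈ T := by
        simp only [hT, Finset.mem_filter, Finset.mem_product]
        exact ⟨⟨hxa, hxb⟩, hxab⟩
      exact hkey (xa, xb) hpT (g xa, g xb) (by rw [dist_comm]; exact hgd xa hxa)
        (by rw [dist_comm]; exact hgd xb hxb)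
  calc y < m := hym
    _ = (S.card : ℕ∞) := hcard.symm
    _ = (S'.card : ℕ∞) := by rw [hcard']
    _ ≤ packingNumber δ (K : Set X) := le_sSup hmem
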